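/- Under the hypotheses of the previous conservation law (m_t + v^p m_x + (a/p)(v^p)_x m = 0 with flow φ, ∂_x φ > 0, φ(t,·) a diffeomorphism of ℝ), if a ≠ 0 and ∫_ℝ |m(0,x)|^{p/a} dx < ∞, then for every t ∈ [0,T), ∫_ℝ |m(t,x)|^{p/a} dx = ∫_ℝ |m(0,x)|^{p/a} dx. -/

import Mathlib

open MeasureTheory

/-- Conservation of the `L^{p/a}`-norm of the momentum along the flow:
from `m(t, φ(t,x)) (∂_x φ)^{a/p} = m(0,x)` and `φ(t,·)` a diffeomorphism,
`∫ |m(t,x)|^{p/a} dx = ∫ |m(0,x)|^{p/a} dx`. -/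
theorem stmt16 (T : ℝ) (hT : 0 < T) (p : ℕ) (hp : 1 ≤ p) (a : ℝ) (ha : a ≠ 0)
    (m : ℝ → ℝ → ℝ) (φ φx : ℝ → ℝ → ℝ)
    (hm_meas : ∀ t, Measurable (m t))
    (hcons : ∀ t ∈ Set.Ico (0:ℝ) T, ∀ x,
      m t (φ t x) * (φx t x) ^ (a / (p:ℝ)) = m 0 x)
    (hφ0 : ∀ x, φ 0 x = x)
    (hφx : ∀ t ∈ Set.Ico (0:ℝ) T, ∀ x, HasDerivAt (fun y => φ t y) (φx t x) x)
    (hφxpos : ∀ t ∈ Set.Ico (0:ℝ) T, ∀ x, 0 < φx t x)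
    (hbij : ∀ t ∈ Set.Ico (0:ℝ) T, Function.Bijective (fun x => φ t x))
    (hint : Integrable (fun x => |m 0 x| ^ ((p:ℝ) / a))) :
    ∀ t ∈ Set.Ico (0:ℝ) T,
      ∫ x : ℝ, |m t x| ^ ((p:ℝ) / a) = ∫ x : ℝ, |m 0 x| ^ ((p:ℝ) / a) := by
  intro t ht
  have hp0 : (p : ℝ) ≠ 0 := by positivity
  have himg : (fun x => φ t x) '' Set.univ = Set.univ :=
    Set.image_univ_of_surjective (hbij t ht).2
  have hcov : ∫ x in (fun x => φ t x) '' Set.univ, |m t x| ^ ((p:ℝ) / a)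
      = ∫ x in Set.univ, |φx t x| • |m t (φ t x)| ^ ((p:ℝ) / a) :=
    integral_image_eq_integral_abs_deriv_smul MeasurableSet.univ
      (fun x _ => ((hφx t ht x).hasDerivWithinAt))
      ((hbij t ht).1.injOn) _
  have hpt : ∀ x, |φx t x| • |m t (φ t x)| ^ ((p:ℝ) / a) = |m 0 x| ^ ((p:ℝ) / a) := by
    intro x
    have hpos := hφxpos t ht x
    have he : a / (p:ℝ) * ((p:ℝ) / a) = 1 := by field_simp
    rw [← hcons t ht x, abs_mul, abs_of_pos hpos,
      Real.mul_rpow (abs_nonneg _) (le_of_lt (by positivity)),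
      abs_of_pos (Real.rpow_pos_of_pos hpos _),
      ← Real.rpow_mul hpos.le, he, Real.rpow_one, smul_eq_mul, mul_comm]
  calc ∫ x : ℝ, |m t x| ^ ((p:ℝ) / a)
      = ∫ x in (fun x => φ t x) '' Set.univ, |m t x| ^ ((p:ℝ) / a) := by
        rw [himg, setIntegral_univ]
    _ = ∫ x in Set.univ, |φx t x| • |m t (φ t x)| ^ ((p:ℝ) / a) := hcov
    _ = ∫ x : ℝ, |m 0 x| ^ ((p:ℝ) / a) := by
        rw [setIntegral_univ]; exact integral_congr_ae (Filter.Eventually.of_forall hpt)
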